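/- Let G be a finite connected simple graph that is {K1 ∪ K3, C4}-free and contains a triangle. Let T be the set of vertices of G that lie on some triangle. Then every vertex of G not in T has exactly one neighbor in T. -/

import Mathlib

open SimpleGraph

/-- `G` is `H`-free: no induced subgraph of `G` is isomorphic to `H`
(an induced copy is a graph embedding). -/
def InducedFree {α β : Type*} (H : SimpleGraph β) (G : SimpleGraph α) : Prop :=
  ¬ Nonempty (H ↪g G)

/-- `K1 ∪ K3`: a triangle `1,2,3` together with the isolated vertex `0`
(the complement of the claw). -/
def K1uK3 : SimpleGraph (Fin 4) := fromEdgeSet {s(1,2), s(1,3), s(2,3)}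

/-- The cycle on four vertices. -/
def C4 : SimpleGraph (Fin 4) := fromEdgeSet {s(0,1), s(1,2), s(2,3), s(3,0)}

/-- The set of vertices of `G` lying on a triangle. -/
def triangleVertices {V : Type*} (G : SimpleGraph V) : Set V :=
  {v | ∃ x y : V, G.Adj v x ∧ G.Adj v y ∧ G.Adj x y}

lemma mk_K1uK3 {V : Type*} {G : SimpleGraph V} {w x y z : V}
    (hxy : G.Adj x y) (hxz : G.Adj x z) (hyz : G.Adj y z)
    (hwx : ¬G.Adj w x) (hwy : ¬G.Adj w y) (hwz : ¬G.Adj w z)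
    (hx : w ≠ x) (hy : w ≠ y) (hz : w ≠ z) : Nonempty (K1uK3 ↪g G) := by
  have hxw : ¬G.Adj x w := fun h => hwx h.symm
  have hyw : ¬G.Adj y w := fun h => hwy h.symm
  have hzw : ¬G.Adj z w := fun h => hwz h.symm
  have hx' := hx.symm; have hy' := hy.symm; have hz' := hz.symm
  refine ⟨⟨![w,x,y,z], ?_⟩, ?_⟩
  · intro i j
    fin_cases i <;> fin_cases j <;>
      simp_all [hxy.ne, hxz.ne, hyz.ne, hxy.ne', hxz.ne', hyz.ne']
  · intro a b
    fin_cases a <;> fin_cases b <;>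
      simp_all [DFunLike.coe, K1uK3, hxy.symm, hxz.symm, hyz.symm, G.irrefl]

lemma mk_C4 {V : Type*} {G : SimpleGraph V} {a b c d : V}
    (hab : G.Adj a b) (hbc : G.Adj b c) (hcd : G.Adj c d) (hda : G.Adj d a)
    (hac : ¬G.Adj a c) (hbd : ¬G.Adj b d)
    (hac' : a ≠ c) (hbd' : b ≠ d) : Nonempty (C4 ↪g G) := by
  have hca : ¬G.Adj c a := fun h => hac h.symm
  have hdb : ¬G.Adj d b := fun h => hbd h.symm
  have hca' := hac'.symm; have hdb' := hbd'.symm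
  refine ⟨⟨![a,b,c,d], ?_⟩, ?_⟩
  · intro i j
    fin_cases i <;> fin_cases j <;>
      simp_all [hab.ne, hbc.ne, hcd.ne, hda.ne, hab.ne', hbc.ne', hcd.ne', hda.ne']
  · intro i j
    fin_cases i <;> fin_cases j <;>
      simp_all [DFunLike.coe, C4, hab.symm, hbc.symm, hcd.symm, hda.symm, G.irrefl]

theorem coclaw_C4_free_unique_triangle_neighbor {V : Type*} [Fintype V]
    (G : SimpleGraph V) (hconn : G.Connected)
    (hK1uK3 : InducedFree K1uK3 G) (hC4 : InducedFree C4 G)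
    (htriangle : ¬ G.CliqueFree 3) :
    ∀ v : V, v ∉ triangleVertices G →
      ∃! t : V, t ∈ triangleVertices G ∧ G.Adj v t := by
  -- key consequence of K1∪K3-freeness
  have key : ∀ x y z w : V, G.Adj x y → G.Adj x z → G.Adj y z →
      w ≠ x → w ≠ y → w ≠ z → G.Adj w x ∨ G.Adj w y ∨ G.Adj w z := by
    intro x y z w hxy hxz hyz hx hy hz
    by_contra h
    push_neg at h
    exact hK1uK3 (mk_K1uK3 hxy hxz hyz h.1 h.2.1 h.2.2 hx hy hz)
  classical
  intro v hv
  rw [SimpleGraph.CliqueFree] at htriangle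
  push_neg at htriangle
  obtain ⟨s, hs⟩ := htriangle
  rw [SimpleGraph.is3Clique_iff] at hs
  obtain ⟨x, y, z, hxy, hxz, hyz, -⟩ := hs
  have hxT : x ∈ triangleVertices G := ⟨y, z, hxy, hxz, hyz⟩
  have hyT : y ∈ triangleVertices G := ⟨x, z, hxy.symm, hyz, hxz⟩
  have hzT : z ∈ triangleVertices G := ⟨x, y, hxz.symm, hyz.symm, hxy⟩
  -- uniqueness claim
  have uniq : ∀ t₁ t₂ : V, t₁ ∈ triangleVertices G → G.Adj v t₁ →
      t₂ ∈ triangleVertices G → G.Adj v t₂ → t₁ = t₂ := by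
    intro t₁ t₂ ht₁ hvt₁ ht₂ hvt₂
    by_contra hne
    have ht12 : ¬G.Adj t₁ t₂ := fun h => hv ⟨t₁, t₂, hvt₁, hvt₂, h⟩
    obtain ⟨a, b, ha, hb, hab⟩ := ht₁
    have hva : ¬G.Adj v a := fun h => hv ⟨t₁, a, hvt₁, h, ha⟩
    have hvb : ¬G.Adj v b := fun h => hv ⟨t₁, b, hvt₁, h, hb⟩
    have ht2a : t₂ ≠ a := fun h => ht12 (h ▸ ha)
    have ht2b : t₂ ≠ b := fun h => ht12 (h ▸ hb)
    have := key t₁ a b t₂ ha hb hab (Ne.symm hne) ht2a ht2b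
    rcases this with h | h | h
    · exact ht12 h.symm
    · -- C4 : v t₁ a t₂
      refine hC4 (mk_C4 hvt₁ ha h.symm hvt₂.symm hva ht12 ?_ ?_)
      · intro h'; subst h'; exact hv ⟨t₁, b, ha.symm, hab, hb⟩
      · exact fun h' => hne h'
    · refine hC4 (mk_C4 hvt₁ hb h.symm hvt₂.symm hvb ht12 ?_ ?_)
      · intro h'; subst h'; exact hv ⟨t₁, a, hb.symm, hab.symm, ha⟩
      · exact fun h' => hne h'
  have hvx : v ≠ x := fun h => hv (h ▸ hxT)
  have hvy : v ≠ y := fun h => hv (h ▸ hyT)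
  have hvz : v ≠ z := fun h => hv (h ▸ hzT)
  rcases key x y z v hxy hxz hyz hvx hvy hvz with h | h | h
  · exact ⟨x, ⟨hxT, h⟩, fun t ht => uniq t x ht.1 ht.2 hxT h⟩
  · exact ⟨y, ⟨hyT, h⟩, fun t ht => uniq t y ht.1 ht.2 hyT h⟩
  · exact ⟨z, ⟨hzT, h⟩, fun t ht => uniq t z ht.1 ht.2 hzT h⟩
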